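/- Let V be a finite set with at least two elements and p : V → ℝ with p(k) > 0 for all k ∈ V and Σ_{k ∈ V} p(k) = 1. Let (U_k)_{k ∈ V} and (U'_k)_{k ∈ V} be two mutually independent families of independent standard Gumbel random variables. Then the probability that the (almost surely unique) index maximizing log p(k) + U_k equals the index maximizing log p(k) + U'_k is Σ_{k ∈ V} p(k)², which is strictly less than 1; in contrast, under shared noise the two argmaxes coincide with probability 1. -/

import Mathlib

open MeasureTheory ProbabilityTheory Real Set
open scoped ENNReal

/-- density of the Gumbel distribution -/
noncomputable def gumbelPdf (x : ℝ) : ℝ := Real.exp (-x - Real.exp (-x))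

lemma gumbelPdf_pos (x : ℝ) : 0 < gumbelPdf x := Real.exp_pos _

lemma hasDerivAt_gumbelCdf (x : ℝ) :
    HasDerivAt (fun x => Real.exp (-Real.exp (-x))) (gumbelPdf x) x := by
  have h1 : HasDerivAt (fun x : ℝ => -Real.exp (-x)) (Real.exp (-x)) x := by
    exact (by simpa using (((hasDerivAt_neg x).exp).neg) : HasDerivAt (-fun x : ℝ => Real.exp (-x)) (Real.exp (-x)) x)
  have : HasDerivAt (fun x => Real.exp (-Real.exp (-x))) (Real.exp (-Real.exp (-x)) * Real.exp (-x)) x :=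
    by have h := (Real.hasDerivAt_exp (-Real.exp (-x))).comp x h1; exact h
  convert this using 1
  rw [gumbelPdf, ← Real.exp_add]
  ring_nf

lemma gumbelPdf_le_exp (x : ℝ) : gumbelPdf x ≤ Real.exp 1 * Real.exp x := by
  rw [gumbelPdf, ← Real.exp_add]
  apply Real.exp_le_exp.2
  have h := Real.add_one_le_exp (-x/2)
  have h2 : Real.exp (-x/2) * Real.exp (-x/2) = Real.exp (-x) := by
    rw [← Real.exp_add]; ring_nf
  nlinarith [Real.exp_pos (-x/2), sq_nonneg (-x/2 - 1)]

lemma gumbelPdf_le_exp_neg (x : ℝ) : gumbelPdf x ≤ Real.exp (-x) := by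
  rw [gumbelPdf, sub_eq_add_neg]
  apply Real.exp_le_exp.2
  simpa using (Real.exp_pos (-x)).le

lemma gumbelPdf_measurable : Measurable gumbelPdf := by
  unfold gumbelPdf; fun_prop

lemma gumbelPdf_integrableOn_Iic (a : ℝ) : IntegrableOn gumbelPdf (Iic a) := by
  have hd : IntegrableOn (fun x => Real.exp 1 * Real.exp x) (Iic a) :=
    (integrableOn_exp_Iic a).const_mul _
  refine hd.mono' ?_ ?_
  · exact (Real.continuous_exp.comp (by continuity)).aestronglyMeasurable.restrict
  · filter_upwards with x
    rw [Real.norm_eq_abs, abs_of_pos (gumbelPdf_pos x)]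
    exact gumbelPdf_le_exp x

lemma gumbelPdf_integrable : Integrable gumbelPdf := by
  rw [← integrableOn_univ, ← Set.Iic_union_Ioi (a := (0:ℝ)), integrableOn_union]
  refine ⟨gumbelPdf_integrableOn_Iic 0, ?_⟩
  have hd : IntegrableOn (fun x => Real.exp (-1 * x)) (Ioi (0:ℝ)) :=
    exp_neg_integrableOn_Ioi 0 one_pos
  refine hd.mono' ?_ ?_
  · exact (Real.continuous_exp.comp (by continuity)).aestronglyMeasurable.restrict
  · filter_upwards with x
    rw [Real.norm_eq_abs, abs_of_pos (gumbelPdf_pos x)]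
    simpa using gumbelPdf_le_exp_neg x

lemma gumbelCdf_integral (a : ℝ) : ∫ x in Iic a, gumbelPdf x = Real.exp (-Real.exp (-a)) := by
  have hten : Filter.Tendsto (fun x : ℝ => Real.exp (-Real.exp (-x))) Filter.atBot (nhds 0) := by
    have h1 : Filter.Tendsto (fun x : ℝ => -Real.exp (-x)) Filter.atBot Filter.atBot :=
      Filter.tendsto_neg_atTop_atBot.comp
        (Real.tendsto_exp_atTop.comp Filter.tendsto_neg_atBot_atTop)
    simpa [Function.comp_def] using Real.tendsto_exp_atBot.comp h1
  have := integral_Iic_of_hasDerivAt_of_tendsto' (fun x _ => hasDerivAt_gumbelCdf x)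
    (gumbelPdf_integrableOn_Iic a) hten
  simpa using this

lemma gumbelPdf_integral : ∫ x, gumbelPdf x = 1 := by
  have hU : (⋃ n : ℕ, Iic (n:ℝ)) = univ := by
    ext x; simp only [mem_iUnion, mem_Iic, mem_univ, iff_true]
    exact exists_nat_ge x
  have h := MeasureTheory.tendsto_setIntegral_of_monotone (s := fun n : ℕ => Iic (n:ℝ))
    (f := gumbelPdf) (fun _ => measurableSet_Iic)
    (fun _ _ h => Iic_subset_Iic.2 (Nat.cast_le.2 h))
    (by rw [hU]; exact gumbelPdf_integrable.integrableOn)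
  rw [hU] at h
  simp only [Measure.restrict_univ] at h
  have h2 : Filter.Tendsto (fun n : ℕ => ∫ x in Iic (n:ℝ), gumbelPdf x) Filter.atTop (nhds 1) := by
    simp_rw [gumbelCdf_integral]
    have h3 : Filter.Tendsto (fun n : ℕ => -Real.exp (-(n:ℝ))) Filter.atTop (nhds 0) := by
      simpa using (Real.tendsto_exp_atBot.comp
        (Filter.tendsto_neg_atBot_iff.mpr tendsto_natCast_atTop_atTop)).neg
    simpa [Function.comp_def] using (Real.continuous_exp.continuousAt (x := (0:ℝ))).tendsto.comp h3
  exact tendsto_nhds_unique h h2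

/-- The standard Gumbel distribution on `ℝ`: the Borel probability measure with density
`x ↦ exp(−x − exp(−x))` with respect to Lebesgue measure. -/
noncomputable def stdGumbel : Measure ℝ :=
  volume.withDensity fun x => ENNReal.ofReal (Real.exp (-x - Real.exp (-x)))

lemma gumbelPdf_def (x : ℝ) : gumbelPdf x = Real.exp (-x - Real.exp (-x)) := rfl

lemma stdGumbel_def : stdGumbel = volume.withDensity fun x => ENNReal.ofReal (gumbelPdf x) := rfl

lemma lintegral_gumbelPdf : ∫⁻ x, ENNReal.ofReal (gumbelPdf x) = 1 := by
  rw [← ofReal_integral_eq_lintegral_ofReal gumbelPdf_integrable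
    (Filter.Eventually.of_forall fun x => (gumbelPdf_pos x).le), gumbelPdf_integral,
    ENNReal.ofReal_one]

instance : IsProbabilityMeasure stdGumbel :=
  ⟨by rw [stdGumbel_def, withDensity_apply _ MeasurableSet.univ, Measure.restrict_univ,
      lintegral_gumbelPdf]⟩

lemma stdGumbel_Iio (a : ℝ) :
    stdGumbel (Iio a) = ENNReal.ofReal (Real.exp (-Real.exp (-a))) := by
  rw [stdGumbel_def, withDensity_apply _ measurableSet_Iio]
  have h1 : ∫⁻ x in Iio a, ENNReal.ofReal (gumbelPdf x) ∂volume
      = ∫⁻ x in Iic a, ENNReal.ofReal (gumbelPdf x) ∂volume :=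
    setLIntegral_congr Iio_ae_eq_Iic
  rw [h1, ← ofReal_integral_eq_lintegral_ofReal (gumbelPdf_integrableOn_Iic a)
    (Filter.Eventually.of_forall fun x => (gumbelPdf_pos x).le), gumbelCdf_integral]

lemma lintegral_gumbelPdf_scaled {c : ℝ} (hc : 0 < c) :
    ∫⁻ x, ENNReal.ofReal (Real.exp (-x - c * Real.exp (-x))) = ENNReal.ofReal (1/c) := by
  have hshift := lintegral_add_right_eq_self (μ := volume)
    (fun x => ENNReal.ofReal (Real.exp (-x - c * Real.exp (-x)))) (Real.log c)
  rw [← hshift]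
  have h2 : ∀ x : ℝ, Real.exp (-(x + Real.log c)) = Real.exp (-x) / c := fun x => by
    rw [neg_add, Real.exp_add]
    rw [show Real.exp (-Real.log c) = 1/c by rw [Real.exp_neg, Real.exp_log hc, one_div]]
    ring
  have heq : ∀ x : ℝ, Real.exp (-(x + Real.log c) - c * Real.exp (-(x + Real.log c)))
      = (1/c) * gumbelPdf x := by
    intro x
    rw [sub_eq_add_neg, Real.exp_add, h2]
    rw [show c * (Real.exp (-x) / c) = Real.exp (-x) by field_simp]
    rw [gumbelPdf, sub_eq_add_neg, Real.exp_add]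
    ring
  simp_rw [heq, ENNReal.ofReal_mul (by positivity : (0:ℝ) ≤ 1/c)]
  rw [lintegral_const_mul' _ _ ENNReal.ofReal_ne_top, lintegral_gumbelPdf, mul_one]

lemma argmaxSet_measurable {V : Type*} [Fintype V] (c : V → ℝ) (j : V) :
    MeasurableSet {x : V → ℝ | ∀ k ≠ j, c k + x k < c j + x j} := by
  rw [show {x : V → ℝ | ∀ k ≠ j, c k + x k < c j + x j}
      = ⋂ k, ⋂ (_ : k ≠ j), {x : V → ℝ | c k + x k < c j + x j} by
    ext x; simp]
  exact MeasurableSet.iInter fun k => MeasurableSet.iInter fun _ =>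
    measurableSet_lt (by fun_prop) (by fun_prop)

lemma pi_argmax {V : Type*} [Fintype V] (p : V → ℝ) (hp : ∀ k, 0 < p k) (hps : ∑ k, p k = 1)
    (j : V) :
    Measure.pi (fun _ : V => stdGumbel)
      {x | ∀ k ≠ j, Real.log (p k) + x k < Real.log (p j) + x j} = ENNReal.ofReal (p j) := by
  classical
  set S := {x : V → ℝ | ∀ k ≠ j, Real.log (p k) + x k < Real.log (p j) + x j} with hSdef
  have hS : MeasurableSet S := argmaxSet_measurable _ j
  set e := MeasurableEquiv.piEquivPiSubtypeProd (fun _ : V => ℝ) (fun i => i = j) with he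
  have mp := measurePreserving_piEquivPiSubtypeProd (fun _ : V => stdGumbel) (fun i => i = j)
  have hmain := ((mp.symm e).measure_preimage hS.nullMeasurableSet).symm
  rw [hmain, Measure.prod_apply (e.symm.measurable hS)]
  haveI : Unique {i : V // i = j} := ⟨⟨⟨j, rfl⟩⟩, fun x => Subtype.ext x.2⟩
  have hbox : ∀ y : (∀ _ : {i : V // i = j}, ℝ),
      (Prod.mk y ⁻¹' (e.symm ⁻¹' S))
        = univ.pi (fun k : {i : V // ¬ i = j} =>
            Iio (y default + (Real.log (p j) - Real.log (p k.1)))) := by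
    intro y
    ext z
    simp only [mem_preimage, mem_pi, mem_univ, mem_Iio, forall_true_left, hSdef, mem_setOf_eq]
    have hz : ∀ k, e.symm (y, z) k = if h : k = j then y ⟨k, h⟩ else z ⟨k, h⟩ := fun _ => rfl
    constructor
    · intro h k
      have := h k.1 k.2
      rw [hz, hz, dif_neg k.2, dif_pos rfl] at this
      have hd : (⟨j, rfl⟩ : {i : V // i = j}) = default := Subsingleton.elim _ _
      rw [← hd]; linarith
    · intro h k hk
      rw [hz, hz, dif_neg hk, dif_pos rfl]
      have hd : (⟨j, rfl⟩ : {i : V // i = j}) = default := Subsingleton.elim _ _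
      rw [hd]
      have := h ⟨k, hk⟩
      linarith
  have hterm : ∀ (t : ℝ) (k : V), Real.exp (-(t + (Real.log (p j) - Real.log (p k))))
      = Real.exp (-t) * (p k / p j) := by
    intro t k
    rw [show -(t + (Real.log (p j) - Real.log (p k)))
        = (-t) + (Real.log (p k) - Real.log (p j)) by ring,
      Real.exp_add, Real.exp_sub, Real.exp_log (hp k), Real.exp_log (hp j)]
  have hsub : (∑ k : {i : V // ¬ i = j}, p k.1) = 1 - p j := by
    rw [← Finset.sum_subtype (Finset.univ.erase j)
      (fun x => by simp [Finset.mem_erase, eq_comm]) p]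
    rw [Finset.sum_erase_eq_sub (Finset.mem_univ j), hps]
  set a : ℝ := (1 - p j) / p j with ha
  have hprod : ∀ t : ℝ,
      (∏ k : {i : V // ¬ i = j},
        ENNReal.ofReal (Real.exp (-Real.exp (-(t + (Real.log (p j) - Real.log (p k.1)))))))
      = ENNReal.ofReal (Real.exp (-(a * Real.exp (-t)))) := by
    intro t
    rw [← ENNReal.ofReal_prod_of_nonneg (fun _ _ => (Real.exp_pos _).le)]
    congr 1
    rw [← Real.exp_sum]
    congr 1
    simp_rw [hterm]
    calc (∑ k : {i : V // ¬ i = j}, -(Real.exp (-t) * (p k.1 / p j)))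
        = ∑ k : {i : V // ¬ i = j}, (-(Real.exp (-t) / p j)) * p k.1 :=
          Finset.sum_congr rfl (fun k _ => by ring)
      _ = (-(Real.exp (-t) / p j)) * ∑ k : {i : V // ¬ i = j}, p k.1 :=
          (Finset.mul_sum _ _ _).symm
      _ = -(a * Real.exp (-t)) := by rw [hsub, ha]; ring
  simp_rw [hbox, Measure.pi_pi, stdGumbel_Iio, hprod]
  have hF : Measurable (fun t : ℝ => ENNReal.ofReal (Real.exp (-(a * Real.exp (-t))))) := by
    fun_prop
  have key : ∀ (F : ℝ → ℝ≥0∞), Measurable F → ∀ (inst : Fintype {i : V // i = j}),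
      (∫⁻ y, F (y default) ∂(@Measure.pi _ _ inst _ (fun _ => stdGumbel)))
        = ∫⁻ t, F t ∂stdGumbel := by
    intro F hF inst
    have hi : inst = Unique.fintype := Subsingleton.elim _ _
    subst hi
    exact (measurePreserving_funUnique stdGumbel _).lintegral_comp hF
  rw [key _ hF _]
  rw [stdGumbel_def, lintegral_withDensity_eq_lintegral_mul _ gumbelPdf_measurable.ennreal_ofReal hF]
  have hcomb : ∀ t : ℝ, ENNReal.ofReal (gumbelPdf t)
      * ENNReal.ofReal (Real.exp (-(a * Real.exp (-t))))
      = ENNReal.ofReal (Real.exp (-t - (1 / p j) * Real.exp (-t))) := by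
    intro t
    rw [← ENNReal.ofReal_mul (by rw [gumbelPdf_def]; exact (Real.exp_pos _).le)]
    congr 1
    rw [gumbelPdf_def, ← Real.exp_add]
    congr 1
    have hpj : p j ≠ 0 := (hp j).ne'
    rw [ha]
    field_simp
    ring
  simp_rw [Pi.mul_apply, hcomb]
  rw [lintegral_gumbelPdf_scaled (one_div_pos.mpr (hp j)), one_div_one_div]

lemma joint_map_eq_pi {ι Ω : Type*} [Fintype ι] [MeasurableSpace Ω] (P : Measure Ω)
    [IsProbabilityMeasure P] (f : ι → Ω → ℝ) (hm : ∀ i, Measurable (f i))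
    (hindep : iIndepFun f P)
    (hmap : ∀ i, P.map (f i) = stdGumbel) :
    P.map (fun ω i => f i ω) = Measure.pi (fun _ => stdGumbel) := by
  refine (Measure.pi_eq fun s hs => ?_).symm
  rw [Measure.map_apply (measurable_pi_lambda _ hm) (MeasurableSet.univ_pi hs)]
  have hpre : (fun ω i => f i ω) ⁻¹' (univ.pi s) = ⋂ i ∈ Finset.univ, f i ⁻¹' s i := by
    ext ω; simp
  rw [hpre, hindep.measure_inter_preimage_eq_mul Finset.univ (fun i _ => hs i)]
  exact Finset.prod_congr rfl fun i _ => by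
    rw [← hmap i, Measure.map_apply (hm i) (hs i)]

/-- Two identical copies of the same model, sampling via the Gumbel-max mechanism with
probability vector `p`, agree (i.e. their almost surely unique argmaxes coincide) with
probability `∑ k, (p k)²  < 1` under independent noise `U, U'`, whereas under shared noise
the argmax exists almost surely (hence trivially both copies agree with probability 1). -/
theorem independent_copies_may_disagree
    {V : Type*} [Fintype V] (hV : 2 ≤ Fintype.card V)
    (p : V → ℝ) (hp : ∀ k, 0 < p k) (hps : ∑ k, p k = 1)
    {Ω : Type*} [MeasurableSpace Ω] (P : Measure Ω) [IsProbabilityMeasure P]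
    (U U' : V → Ω → ℝ)
    (hUm : ∀ k, Measurable (U k)) (hU'm : ∀ k, Measurable (U' k))
    -- the `2 |V|` variables `U_k, U'_k` are mutually independent
    (hindep : iIndepFun (Sum.elim U U') P)
    (hgumbel : ∀ k, P.map (U k) = stdGumbel) (hgumbel' : ∀ k, P.map (U' k) = stdGumbel) :
    P {ω | ∃ j, (∀ k ≠ j, Real.log (p k) + U k ω < Real.log (p j) + U j ω) ∧
          (∀ k ≠ j, Real.log (p k) + U' k ω < Real.log (p j) + U' j ω)} =
        ENNReal.ofReal (∑ k, (p k) ^ 2) ∧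
      (∑ k, (p k) ^ 2) < 1 ∧
      P {ω | ∃ j, ∀ k ≠ j, Real.log (p k) + U k ω < Real.log (p j) + U j ω} = 1 := by
  classical
  have hWm : ∀ i, Measurable (Sum.elim U U' i) := by rintro (k|k); exacts [hUm k, hU'm k]
  have hWmap : ∀ i, P.map (Sum.elim U U' i) = stdGumbel := by
    rintro (k|k); exacts [hgumbel k, hgumbel' k]
  have hjoint : P.map (fun ω (i : V ⊕ V) => Sum.elim U U' i ω)
      = Measure.pi (fun _ : V ⊕ V => stdGumbel) :=
    joint_map_eq_pi P _ hWm hindep hWmap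
  set T := fun ω (i : V ⊕ V) => Sum.elim U U' i ω with hT
  have hTm : Measurable T := measurable_pi_lambda _ hWm
  set S : V → Set (V → ℝ) :=
    fun j => {x | ∀ k ≠ j, Real.log (p k) + x k < Real.log (p j) + x j} with hSdef
  have hSm : ∀ j, MeasurableSet (S j) := fun j => argmaxSet_measurable _ j
  have hSval : ∀ j, Measure.pi (fun _ : V => stdGumbel) (S j) = ENNReal.ofReal (p j) :=
    pi_argmax p hp hps
  have hdisj : ∀ {j j' : V}, j ≠ j' → Disjoint (S j) (S j') := by
    intro j j' hne
    rw [Set.disjoint_left]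
    intro x hx hx'
    exact lt_asymm (hx j' (Ne.symm hne)) (hx' j hne)
  set e2 := MeasurableEquiv.sumPiEquivProdPi (fun _ : V ⊕ V => ℝ) with he2
  have mp2 := measurePreserving_sumPiEquivProdPi (fun _ : V ⊕ V => stdGumbel)
  -- part 2 : sum of squares < 1
  haveI : Nonempty V := Fintype.card_pos_iff.mp (by omega)
  have hlt : (∑ k, p k ^ 2) < 1 := by
    rw [← hps]
    refine Finset.sum_lt_sum_of_nonempty Finset.univ_nonempty ?_
    intro k _
    have hk1 : p k < 1 := by
      obtain ⟨k', hk'⟩ := Fintype.exists_ne_of_one_lt_card (by omega) k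
      have hsum2 : p k + p k' ≤ ∑ i, p i := by
        rw [show p k + p k' = ∑ i ∈ ({k, k'} : Finset V), p i by
          rw [Finset.sum_pair (Ne.symm hk')]]
        exact Finset.sum_le_sum_of_subset_of_nonneg (Finset.subset_univ _)
          (fun i _ _ => (hp i).le)
      rw [hps] at hsum2
      linarith [hp k']
    nlinarith [hp k]
  -- first event
  have hDm : MeasurableSet (⋃ j, S j ×ˢ S j) :=
    MeasurableSet.iUnion fun j => (hSm j).prod (hSm j)
  have hev1 : {ω | ∃ j, (∀ k ≠ j, Real.log (p k) + U k ω < Real.log (p j) + U j ω) ∧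
          (∀ k ≠ j, Real.log (p k) + U' k ω < Real.log (p j) + U' j ω)}
      = T ⁻¹' (e2 ⁻¹' (⋃ j, S j ×ˢ S j)) := by
    ext ω
    simp only [mem_setOf_eq, mem_preimage, mem_iUnion, mem_prod, hSdef]
    exact Iff.rfl
  have hval1 : P {ω | ∃ j, (∀ k ≠ j, Real.log (p k) + U k ω < Real.log (p j) + U j ω) ∧
          (∀ k ≠ j, Real.log (p k) + U' k ω < Real.log (p j) + U' j ω)}
      = ENNReal.ofReal (∑ k, (p k) ^ 2) := by
    rw [hev1, ← Measure.map_apply hTm (e2.measurable hDm), hjoint,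
      mp2.measure_preimage hDm.nullMeasurableSet]
    rw [measure_iUnion ?_ (fun j => (hSm j).prod (hSm j))]
    · simp_rw [Measure.prod_prod, hSval]
      rw [tsum_fintype]
      have hsq : ∀ b : V, ENNReal.ofReal (p b) * ENNReal.ofReal (p b)
          = ENNReal.ofReal (p b ^ 2) :=
        fun b => by rw [← ENNReal.ofReal_mul (hp b).le, sq]
      simp_rw [hsq]
      rw [← ENNReal.ofReal_sum_of_nonneg (fun k _ => sq_nonneg _)]
    · intro j j' hne
      rw [Function.onFun, Set.disjoint_left]
      rintro ⟨x, y⟩ ⟨hx, -⟩ ⟨hx', -⟩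
      exact Set.disjoint_left.mp (hdisj hne) hx hx'
  -- third event
  have hE3m : MeasurableSet ((⋃ j, S j) ×ˢ (univ : Set (V → ℝ))) :=
    (MeasurableSet.iUnion fun j => hSm j).prod MeasurableSet.univ
  have hev3 : {ω | ∃ j, ∀ k ≠ j, Real.log (p k) + U k ω < Real.log (p j) + U j ω}
      = T ⁻¹' (e2 ⁻¹' ((⋃ j, S j) ×ˢ (univ : Set (V → ℝ)))) := by
    ext ω
    simp only [mem_setOf_eq, mem_preimage, mem_prod, mem_iUnion, mem_univ, and_true, hSdef]
    exact Iff.rfl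
  have hval3 : P {ω | ∃ j, ∀ k ≠ j, Real.log (p k) + U k ω < Real.log (p j) + U j ω} = 1 := by
    rw [hev3, ← Measure.map_apply hTm (e2.measurable hE3m), hjoint,
      mp2.measure_preimage hE3m.nullMeasurableSet]
    rw [Measure.prod_prod, measure_univ, mul_one,
      measure_iUnion (fun j j' hne => hdisj hne) hSm]
    simp_rw [hSval]
    rw [tsum_fintype, ← ENNReal.ofReal_sum_of_nonneg (fun k _ => (hp k).le), hps,
      ENNReal.ofReal_one]
  exact ⟨hval1, hlt, hval3⟩
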